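/- Let D ⊆ ℝ² be a nonempty compact connected set with nonempty interior, and let ψ₁, ψ₂, … : ℝ² → ℝ² be affine maps such that ψ₁(D) ⊆ D, ψ_{k+1}(D) ⊆ ψ_k(D) for every k ≥ 1, and the determinants of the linear parts of the ψ_k converge to 0 as k → ∞. Then the intersection S = ⋂_{k≥1} ψ_k(D) is a nonempty compact connected set contained in some affine line of ℝ²; in particular, S is a single point or a line segment. -/

import Mathlib

open Set

private theorem affine_vol (f : (ℝ × ℝ) →ᵃ[ℝ] (ℝ × ℝ)) (s : Set (ℝ × ℝ)) :
    MeasureTheory.volume (⇑f '' s)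
      = ENNReal.ofReal |LinearMap.det f.linear| * MeasureTheory.volume s := by
  have hx : ∀ x, f x = f.linear x + f 0 := fun x => congrFun f.decomp x
  have h : ⇑f '' s = (· + f 0) '' (⇑f.linear '' s) := by
    rw [Set.image_image]; exact Set.image_congr' hx
  rw [h, Set.image_add_right, MeasureTheory.measure_preimage_add_right,
    MeasureTheory.Measure.addHaar_image_linearMap]

private theorem image_iInter_nested (g : (ℝ × ℝ) → ℝ) (hg : Continuous g)
    (K : ℕ → Set (ℝ × ℝ)) (hc : ∀ n, IsCompact (K n)) (hm : ∀ n, K (n + 1) ⊆ K n) :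
    g '' (⋂ n, K n) = ⋂ n, g '' K n := by
  apply Set.Subset.antisymm (Set.image_iInter_subset K g)
  intro y hy
  simp only [mem_iInter] at hy
  set C : ℕ → Set (ℝ × ℝ) := fun n => K n ∩ g ⁻¹' {y} with hC
  have hCc : ∀ n, IsCompact (C n) := fun n =>
    (hc n).inter_right (isClosed_singleton.preimage hg)
  have hCne : ∀ n, (C n).Nonempty := by
    intro n
    obtain ⟨x, hx, hgx⟩ := hy n
    exact ⟨x, hx, by simpa using hgx⟩
  obtain ⟨x, hx⟩ := IsCompact.nonempty_iInter_of_sequence_nonempty_isCompact_isClosed C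
    (fun n => inter_subset_inter_left _ (hm n)) hCne (hCc 0) (fun n => (hCc n).isClosed)
  simp only [hC, mem_iInter, mem_inter_iff, mem_preimage, mem_singleton_iff] at hx
  exact ⟨x, mem_iInter.2 fun n => (hx n).1, (hx 0).2⟩

theorem limit_set_is_point_or_segment (D : Set (ℝ × ℝ)) (hne : D.Nonempty)
    (hcomp : IsCompact D) (hconn : IsConnected D) (hint : (interior D).Nonempty)
    (ψ : ℕ → ((ℝ × ℝ) →ᵃ[ℝ] (ℝ × ℝ)))
    (h0 : ψ 0 '' D ⊆ D)
    (hnest : ∀ k : ℕ, ψ (k + 1) '' D ⊆ ψ k '' D)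
    (hdet : Filter.Tendsto (fun k => LinearMap.det (ψ k).linear)
      Filter.atTop (nhds 0)) :
    (⋂ k, ψ k '' D).Nonempty ∧ IsCompact (⋂ k, ψ k '' D) ∧
    IsConnected (⋂ k, ψ k '' D) ∧
    (∃ a b : ℝ × ℝ, a ≠ b ∧
      (⋂ k, ψ k '' D) ⊆ (affineSpan ℝ ({a, b} : Set (ℝ × ℝ)) : Set (ℝ × ℝ))) ∧
    ∃ x y : ℝ × ℝ, (⋂ k, ψ k '' D) = segment ℝ x y := by
  classical
  set A : ℕ → Set (ℝ × ℝ) := fun k => ψ k '' D with hA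
  have hψc : ∀ k, Continuous (ψ k) := fun k => (ψ k).continuous_of_finiteDimensional
  have hAcomp : ∀ k, IsCompact (A k) := fun k => hcomp.image (hψc k)
  have hAne : ∀ k, (A k).Nonempty := fun k => hne.image _
  set S : Set (ℝ × ℝ) := ⋂ k, A k with hS
  -- nonempty
  have hSne : S.Nonempty :=
    IsCompact.nonempty_iInter_of_sequence_nonempty_isCompact_isClosed A hnest hAne
      (hAcomp 0) (fun n => (hAcomp n).isClosed)
  -- compact
  have hSclosed : IsClosed S := isClosed_iInter fun n => (hAcomp n).isClosed
  have hScomp : IsCompact S := (hAcomp 0).of_isClosed_subset hSclosed (iInter_subset A 0)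
  -- the convex "hull" intersection
  set Kinf : Set (ℝ × ℝ) := ⋂ k, convexHull ℝ (A k) with hKinf
  have hSK : S ⊆ Kinf := iInter_mono fun k => subset_convexHull ℝ (A k)
  have hKconv : Convex ℝ Kinf := convex_iInter fun k => convex_convexHull ℝ _
  -- measure zero
  have hCfin : MeasureTheory.volume (convexHull ℝ D) < ⊤ := by
    obtain ⟨R, hR⟩ := (isBounded_convexHull.2 hcomp.isBounded).subset_closedBall 0
    exact lt_of_le_of_lt (MeasureTheory.measure_mono hR)
      (isCompact_closedBall 0 R).measure_lt_top
  have hμle : ∀ k, MeasureTheory.volume Kinf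
      ≤ ENNReal.ofReal |LinearMap.det (ψ k).linear| * MeasureTheory.volume (convexHull ℝ D) := by
    intro k
    have h1 : Kinf ⊆ ⇑(ψ k) '' convexHull ℝ D := by
      rw [AffineMap.image_convexHull]
      exact iInter_subset _ k
    calc MeasureTheory.volume Kinf ≤ MeasureTheory.volume (⇑(ψ k) '' convexHull ℝ D) :=
          MeasureTheory.measure_mono h1
      _ = _ := affine_vol _ _
  have hten : Filter.Tendsto
      (fun k => ENNReal.ofReal |LinearMap.det (ψ k).linear|
        * MeasureTheory.volume (convexHull ℝ D)) Filter.atTop (nhds 0) := by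
    have h1 : Filter.Tendsto (fun k => |LinearMap.det (ψ k).linear|) Filter.atTop (nhds 0) := by
      simpa using hdet.abs
    have h2 := ENNReal.Tendsto.mul_const (ENNReal.tendsto_ofReal h1) (Or.inr hCfin.ne)
    simpa using h2
  have hμ0 : MeasureTheory.volume Kinf = 0 :=
    le_zero_iff.1 (ge_of_tendsto hten (Filter.Eventually.of_forall hμle))
  -- not full span
  have hKint : ¬ (interior Kinf).Nonempty := fun h =>
    absurd hμ0 (MeasureTheory.Measure.measure_pos_of_nonempty_interior _ h).ne'
  have hspan : affineSpan ℝ Kinf ≠ ⊤ := fun ht =>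
    hKint (hKconv.interior_nonempty_iff_affineSpan_eq_top.2 ht)
  obtain ⟨p, hpS⟩ := id hSne
  have hpK : p ∈ Kinf := hSK hpS
  -- direction has rank ≤ 1
  set W : Submodule ℝ (ℝ × ℝ) := (affineSpan ℝ Kinf).direction with hW
  have hWne : W ≠ ⊤ := by
    intro h
    exact hspan ((AffineSubspace.direction_eq_top_iff_of_nonempty
      ((affineSpan_nonempty (k := ℝ)).2 ⟨p, hpK⟩)).1 h)
  have hWrk : Module.finrank ℝ W ≤ 1 := by
    have := Submodule.finrank_lt hWne
    simp only [Module.finrank_prod, Module.finrank_self] at this; omega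
  obtain ⟨v₀, hv₀⟩ := finrank_le_one_iff.1 hWrk
  have hmemW : ∀ x ∈ S, x - p ∈ W := by
    intro x hx
    have h1 : x ∈ affineSpan ℝ Kinf := mem_affineSpan ℝ (hSK hx)
    have h2 : p ∈ affineSpan ℝ Kinf := mem_affineSpan ℝ hpK
    exact AffineSubspace.vsub_mem_direction h1 h2
  -- get the line's direction vector
  obtain ⟨v, hv, hline⟩ : ∃ v : ℝ × ℝ, v ≠ 0 ∧ ∀ x ∈ S, ∃ t : ℝ, x = p + t • v := by
    by_cases hz : (v₀ : ℝ × ℝ) = 0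
    · refine ⟨(1, 0), by simp [Prod.ext_iff], fun x hx => ⟨0, ?_⟩⟩
      obtain ⟨c, hc⟩ := hv₀ ⟨x - p, hmemW x hx⟩
      have : c • (v₀ : ℝ × ℝ) = x - p := by
        simpa using congrArg (Subtype.val) hc
      rw [hz, smul_zero] at this
      have : x = p := by linear_combination (norm := module) -this
      simp [this]
    · refine ⟨(v₀ : ℝ × ℝ), hz, fun x hx => ?_⟩
      obtain ⟨c, hc⟩ := hv₀ ⟨x - p, hmemW x hx⟩
      have hc' : c • (v₀ : ℝ × ℝ) = x - p := by
        simpa using congrArg (Subtype.val) hc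
      exact ⟨c, by linear_combination (norm := module) -hc'⟩
  -- the affine parametrization of the line
  set F : ℝ →ᵃ[ℝ] (ℝ × ℝ) := AffineMap.lineMap p (p + v) with hF
  have hFt : ∀ t : ℝ, F t = p + t • v := by
    intro t
    show AffineMap.lineMap p (p + v) t = p + t • v
    rw [AffineMap.lineMap_apply_module]
    module
  -- the projection to the line
  have hvsq : v.1 ^ 2 + v.2 ^ 2 ≠ 0 := by
    intro h
    obtain ⟨h1, h2⟩ := (add_eq_zero_iff_of_nonneg (sq_nonneg v.1) (sq_nonneg v.2)).1 h
    exact hv (Prod.ext (sq_eq_zero_iff.1 h1) (sq_eq_zero_iff.1 h2))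
  set g : (ℝ × ℝ) → ℝ :=
    fun x => ((x.1 - p.1) * v.1 + (x.2 - p.2) * v.2) / (v.1 ^ 2 + v.2 ^ 2) with hg
  have hgc : Continuous g := by
    apply Continuous.div_const
    exact ((continuous_fst.sub continuous_const).mul continuous_const).add
      ((continuous_snd.sub continuous_const).mul continuous_const)
  have hkey : ∀ x ∈ S, F (g x) = x := by
    intro x hx
    obtain ⟨t, ht⟩ := hline x hx
    have hgx : g x = t := by
      rw [hg, ht]
      simp only [Prod.fst_add, Prod.snd_add, Prod.smul_fst, Prod.smul_snd, smul_eq_mul]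
      field_simp
      ring
    rw [hgx, hFt, ht]
  -- S is the image of T := g '' S under F, and T is a closed interval
  set T : Set ℝ := g '' S with hT
  have hTne : T.Nonempty := hSne.image g
  have hTcomp : IsCompact T := hScomp.image hgc
  have hTiInter : T = ⋂ n, g '' A n :=
    image_iInter_nested g hgc A hAcomp hnest
  have hTord : OrdConnected T := by
    rw [hTiInter]
    apply ordConnected_iInter
    intro n
    have h1 : IsConnected ((g ∘ ψ n) '' D) := hconn.image _ ((hgc.comp (hψc n)).continuousOn)
    rw [Set.image_comp] at h1
    exact h1.isPreconnected.ordConnected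
  have hTIcc : T = Icc (sInf T) (sSup T) := by
    apply Set.Subset.antisymm
    · exact fun t ht => ⟨csInf_le hTcomp.bddBelow ht, le_csSup hTcomp.bddAbove ht⟩
    · exact hTord.out (hTcomp.sInf_mem hTne) (hTcomp.sSup_mem hTne)
  have hSFT : S = ⇑F '' T := by
    apply Set.Subset.antisymm
    · intro x hx
      exact ⟨g x, ⟨x, hx, rfl⟩, hkey x hx⟩
    · rintro _ ⟨t, ⟨x, hx, rfl⟩, rfl⟩
      rw [hkey x hx]
      exact hx
  have hcd : sInf T ≤ sSup T := by
    obtain ⟨t, ht⟩ := hTne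
    exact le_trans (csInf_le hTcomp.bddBelow ht) (le_csSup hTcomp.bddAbove ht)
  have hSseg : S = segment ℝ (F (sInf T)) (F (sSup T)) := by
    rw [← image_segment ℝ F, segment_eq_Icc hcd, hSFT]
    exact congrArg (Set.image ⇑F) hTIcc
  -- assemble
  refine ⟨hSne, hScomp, ?_, ?_, ?_⟩
  · rw [hSseg]
    exact (convex_segment _ _).isConnected ⟨_, left_mem_segment ℝ _ _⟩
  · refine ⟨p, p + v, by simp [hv], fun x hx => ?_⟩
    obtain ⟨t, ht⟩ := hline x hx
    have : F t = x := by rw [hFt, ht]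
    rw [← this]
    exact AffineMap.lineMap_mem_affineSpan_pair t p (p + v)
  · exact ⟨_, _, hSseg⟩
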